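/- Let G be a group with a finite normal subgroup H and g ∈ G \ H with g² ∉ H and g³ ∉ H. Let m = 3|H| and let R be the submatrix of the Cayley table of G with rows H ∪ gH and columns H ∪ g⁻¹H. Then R contains exactly m symbols but is not contained in any m × m subsquare of the Cayley table. -/
import Mathlib

open Pointwise

theorem stmt7 {G : Type*} [Group G] [DecidableEq G] (H : Subgroup G) [H.Normal] [Finite H]
    (g : G) (hg : g ∉ H) (hg2 : g ^ 2 ∉ H) (hg3 : g ^ 3 ∉ H) :
    Nat.card ((((H : Set G) ∪ g • (H : Set G)) *
        ((H : Set G) ∪ g⁻¹ • (H : Set G))) : Set G) = 3 * Nat.card H ∧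
    ¬ ∃ (R C : Finset G),
        ((H : Set G) ∪ g • (H : Set G)) ⊆ (R : Set G) ∧
        ((H : Set G) ∪ g⁻¹ • (H : Set G)) ⊆ (C : Set G) ∧
        R.card = 3 * Nat.card H ∧ C.card = 3 * Nat.card H ∧
        ((R ×ˢ C).image (fun p => p.1 * p.2)).card = 3 * Nat.card H := by
  have hnorm : ∀ x : G, ∀ h ∈ H, x * h * x⁻¹ ∈ H := fun x h hh =>
    (‹H.Normal›).conj_mem h hh x
  set S : Set G := (H : Set G) ∪ g • (H : Set G) ∪ g⁻¹ • (H : Set G) with hSdef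
  have hprod : (((H : Set G) ∪ g • (H : Set G)) *
      ((H : Set G) ∪ g⁻¹ • (H : Set G))) = S := by
    ext a
    constructor
    · rintro ⟨x, hx, y, hy, rfl⟩
      rcases hx with hx | ⟨h1, hh1, rfl⟩ <;> rcases hy with hy | ⟨h2, hh2, rfl⟩
      · exact Or.inl (Or.inl (H.mul_mem hx hy))
      · refine Or.inr ⟨g * x * g⁻¹ * h2, H.mul_mem (hnorm g x hx) hh2, ?_⟩
        simp [smul_eq_mul]; group
      · refine Or.inl (Or.inr ⟨h1 * y, H.mul_mem hh1 hy, ?_⟩)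
        simp [smul_eq_mul, mul_assoc]
      · refine Or.inl (Or.inl ?_)
        have : (g * h1 * g⁻¹) * h2 ∈ H := H.mul_mem (hnorm g h1 hh1) hh2
        simpa [smul_eq_mul, mul_assoc] using this
    · rintro ((ha | ⟨h, hh, rfl⟩) | ⟨h, hh, rfl⟩)
      · exact ⟨a, Or.inl ha, 1, Or.inl H.one_mem, mul_one a⟩
      · exact ⟨g * h, Or.inr ⟨h, hh, rfl⟩, 1, Or.inl H.one_mem, mul_one _⟩
      · exact ⟨1, Or.inl H.one_mem, g⁻¹ * h, Or.inr ⟨h, hh, rfl⟩, one_mul _⟩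
  have hHfin : (H : Set G).Finite := Set.toFinite _
  have hgHfin : (g • (H : Set G)).Finite := hHfin.smul_set
  have hgiHfin : (g⁻¹ • (H : Set G)).Finite := hHfin.smul_set
  -- disjointness
  have hd1 : Disjoint (H : Set G) (g • (H : Set G)) := by
    rw [Set.disjoint_left]
    rintro a ha ⟨h, hh, rfl⟩
    exact hg (by simpa using H.mul_mem ha (H.inv_mem hh) : g ∈ H)
  have hd2 : Disjoint ((H : Set G) ∪ g • (H : Set G)) (g⁻¹ • (H : Set G)) := by
    rw [Set.disjoint_left]
    rintro a (ha | ⟨h, hh, rfl⟩) ⟨h', hh', heq⟩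
    · simp only [smul_eq_mul] at heq
      have hmem : g⁻¹ ∈ H := by
        rw [show g⁻¹ = a * h'⁻¹ from by rw [← heq, mul_inv_cancel_right]]
        exact H.mul_mem ha (H.inv_mem hh')
      exact hg (by simpa using H.inv_mem hmem)
    · apply hg2
      simp only [smul_eq_mul] at heq
      have h3 : h' = g * (g * h) := by rw [← heq, mul_inv_cancel_left]
      have h4 : g ^ 2 = h' * h⁻¹ := by rw [h3, pow_two]; group
      rw [h4]; exact H.mul_mem hh' (H.inv_mem hh)
  have hcardS : S.ncard = 3 * Nat.card H := by
    have h1 : (g • (H : Set G)).ncard = (H : Set G).ncard := Set.ncard_smul_set _ _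
    have h2 : (g⁻¹ • (H : Set G)).ncard = (H : Set G).ncard := Set.ncard_smul_set _ _
    have hc : Nat.card H = (H : Set G).ncard := by
      rw [← Nat.card_coe_set_eq]; rfl
    rw [hSdef, Set.ncard_union_eq hd2 (hHfin.union hgHfin) hgiHfin,
      Set.ncard_union_eq hd1 hHfin hgHfin, h1, h2, hc]
    ring
  have hSfin : S.Finite := (hHfin.union hgHfin).union hgiHfin
  have part1 : Nat.card ((((H : Set G) ∪ g • (H : Set G)) *
      ((H : Set G) ∪ g⁻¹ • (H : Set G))) : Set G) = 3 * Nat.card H := by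
    rw [hprod, Nat.card_coe_set_eq, hcardS]
  refine ⟨part1, ?_⟩
  rintro ⟨R, C, hR, hC, hRcard, hCcard, himg⟩
  -- R ⊆ S and C ⊆ S would follow from image = S; first show image ⊇ S
  classical
  set I := (R ×ˢ C).image (fun p : G × G => p.1 * p.2) with hIdef
  have hSI : S ⊆ (I : Set G) := by
    rw [← hprod]
    rintro a ⟨x, hx, y, hy, rfl⟩
    exact Finset.mem_coe.2 (Finset.mem_image.2 ⟨(x, y),
      Finset.mem_product.2 ⟨hR hx, hC hy⟩, rfl⟩)
  have hIS : (I : Set G) = S := by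
    have h1 : hSfin.toFinset ⊆ I := fun a ha => hSI (hSfin.mem_toFinset.1 ha)
    have h2 : hSfin.toFinset.card = I.card := by
      rw [himg, ← hcardS, Set.ncard_eq_toFinset_card _ hSfin]
    have := Finset.eq_of_subset_of_card_le h1 (le_of_eq h2.symm)
    rw [← this]; simp
  -- 1 ∈ R, so C ⊆ S
  have h1R : (1 : G) ∈ R := hR (Or.inl H.one_mem)
  have h1C : (1 : G) ∈ C := hC (Or.inl H.one_mem)
  have hCS : (C : Set G) ⊆ S := by
    intro c hc
    have : (1 : G) * c ∈ I := Finset.mem_image.2 ⟨(1, c),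
      Finset.mem_product.2 ⟨h1R, hc⟩, rfl⟩
    rw [one_mul] at this
    rw [← hIS]; exact this
  have hRS : (R : Set G) ⊆ S := by
    intro r hr
    have : r * (1 : G) ∈ I := Finset.mem_image.2 ⟨(r, 1),
      Finset.mem_product.2 ⟨hr, h1C⟩, rfl⟩
    rw [mul_one] at this
    rw [← hIS]; exact this
  have hCeq : (C : Set G) = S := by
    apply Set.eq_of_subset_of_ncard_le hCS _ hSfin
    rw [hcardS, Set.ncard_coe_finset, hCcard]
  have hgC : g ∈ C := by
    have : g ∈ S := Or.inl (Or.inr ⟨1, H.one_mem, mul_one g⟩)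
    rw [← hCeq] at this; exact this
  have hgR : g ∈ R := hR (Or.inr ⟨1, H.one_mem, mul_one g⟩)
  have hg2S : g * g ∈ S := by
    rw [← hIS]
    exact Finset.mem_image.2 ⟨(g, g), Finset.mem_product.2 ⟨hgR, hgC⟩, rfl⟩
  rcases hg2S with (h | ⟨h, hh, heq⟩) | ⟨h, hh, heq⟩
  · exact hg2 (by rwa [pow_two])
  · apply hg
    simp only [smul_eq_mul] at heq
    have h3 : h = g := mul_left_cancel heq
    rwa [← h3]
  · apply hg3
    simp only [smul_eq_mul] at heq
    have h3 : h = g * (g * g) := by rw [← heq, mul_inv_cancel_left]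
    have h4 : g ^ 3 = h := by rw [h3, pow_succ, pow_two, mul_assoc]
    exact h4 ▸ hh
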